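/- There do not exist coprime positive integers a, b with a even and b odd such that there exist odd coprime positive integers c, d satisfying 2abcd = (a² + b²)(c² − d²). -/

import Mathlib

private lemma sqmod8 (n : ℕ) : n^2 % 8 = 0 ∨ n^2 % 8 = 1 ∨ n^2 % 8 = 4 := by
  have h : n^2 % 8 = (n % 8)^2 % 8 := by rw [Nat.pow_mod]
  have h2 : n % 8 < 8 := Nat.mod_lt _ (by norm_num)
  interval_cases h3 : n % 8 <;> simp [h3] at h <;> omega

private lemma oddsqmod8 (n : ℕ) (hn : n % 2 = 1) : n^2 % 8 = 1 := by
  have h : n^2 % 8 = (n % 8)^2 % 8 := by rw [Nat.pow_mod]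
  have h4 : n % 2 = (n % 8) % 2 := (Nat.mod_mod_of_dvd n (by norm_num)).symm
  have h2 : n % 8 < 8 := Nat.mod_lt _ (by norm_num)
  interval_cases h3 : n % 8 <;> simp [h3] at h h4 <;> omega

set_option maxHeartbeats 1000000 in
private lemma descent_core (e : ℕ)
    (IH : ∀ e' : ℕ, e' < e → ∀ a b : ℕ, 0 < a → 0 < b → Nat.Coprime a b →
      a^4 + 3*a^2*b^2 + b^4 ≠ e'^2)
    (a b : ℕ) (ha : 0 < a) (hb : 0 < b) (ha2 : a % 2 = 0) (hb2 : b % 2 = 1)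
    (hab : Nat.Coprime a b) (heq : a^4 + 3*a^2*b^2 + b^4 = e^2) : False := by
  -- coprimality of the legs
  have hab2 : (a^2 + b^2) % 2 = 1 := by
    have h1 : a^2 % 2 = (a % 2)^2 % 2 := by rw [Nat.pow_mod]
    have h2 : b^2 % 2 = (b % 2)^2 % 2 := by rw [Nat.pow_mod]
    rw [ha2] at h1; rw [hb2] at h2; omega
  have c1 : Nat.Coprime a (a^2 + b^2) := by
    have := (Nat.coprime_add_mul_right_right a (b^2) a).mpr (hab.pow_right 2)
    have heq2 : b^2 + a * a = a^2 + b^2 := by ring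
    rwa [heq2] at this
  have c2 : Nat.Coprime b (a^2 + b^2) := by
    have := (Nat.coprime_add_mul_right_right b (a^2) b).mpr (hab.symm.pow_right 2)
    have heq2 : a^2 + b * b = a^2 + b^2 := by ring
    rwa [heq2] at this
  have cc : Nat.Coprime (a*b) (a^2 + b^2) := Nat.Coprime.mul c1 c2
  -- the Pythagorean triple
  have heqz : (a:ℤ)^4 + 3*a^2*b^2 + b^4 = (e:ℤ)^2 := by exact_mod_cast heq
  have ht : PythagoreanTriple ((a:ℤ)*b) ((a:ℤ)^2 + b^2) e := by
    show ((a:ℤ)*b) * ((a:ℤ)*b) + ((a:ℤ)^2 + b^2) * ((a:ℤ)^2 + b^2) = (e:ℤ) * e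
    linear_combination heqz
  have hg : Int.gcd ((a:ℤ)*b) ((a:ℤ)^2 + b^2) = 1 := by
    have : ((a:ℤ)*b) = ((a*b : ℕ) : ℤ) := by push_cast; ring
    have h2 : ((a:ℤ)^2 + b^2) = ((a^2+b^2 : ℕ) : ℤ) := by push_cast; ring
    rw [this, h2, Int.gcd_natCast_natCast]
    exact cc
  obtain ⟨m, n, hmn1, hz, hcmn, hpar⟩ :=
    PythagoreanTriple.coprime_classification.mp ⟨ht, hg⟩
  -- the first branch is impossible by parity
  rcases hmn1 with ⟨hx, hy⟩ | ⟨hx, hy⟩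
  · -- a*b = m^2-n^2 and a^2+b^2 = 2*m*n : impossible since a^2+b^2 odd
    have : (2:ℤ) ∣ ((a:ℤ)^2 + b^2) := ⟨m*n, by linarith⟩
    have h2 : ((a:ℤ)^2+b^2) = ((a^2+b^2 : ℕ) : ℤ) := by push_cast; ring
    rw [h2] at this
    have : (2:ℕ) ∣ (a^2+b^2) := by exact_mod_cast this
    omega
  -- main branch
  have he0 : 0 < e := by
    rcases Nat.eq_zero_or_pos e with h0 | h; swap; · exact h
    rw [h0] at heq
    have : b^4 = 0 := by omega
    have : b = 0 := by exact pow_eq_zero_iff (by norm_num) |>.mp this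
    omega
  have hze : (e:ℤ) = m^2 + n^2 := by
    rcases hz with h | h
    · exact h
    · exfalso
      have h1 : (0:ℤ) ≤ m^2 + n^2 := by positivity
      have h2 : (1:ℤ) ≤ e := by exact_mod_cast he0
      omega
  set M := m.natAbs with hMdef
  set N := n.natAbs with hNdef
  have hM2 : ((M:ℤ))^2 = m^2 := Int.natAbs_sq m
  have hN2 : ((N:ℤ))^2 = n^2 := Int.natAbs_sq n
  have hmn_pos : 0 < m * n := by
    have h1 : (1:ℤ) ≤ (a:ℤ)*b := by
      have : (1:ℕ) ≤ a*b := Nat.one_le_iff_ne_zero.mpr (by positivity)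
      exact_mod_cast this
    nlinarith [hx]
  have hMN : ((M:ℤ)) * (N:ℤ) = m * n := by
    rw [← Int.natCast_mul, hMdef, hNdef, ← Int.natAbs_mul,
      Int.natAbs_of_nonneg (le_of_lt hmn_pos)]
  have habMN : a * b = 2 * (M * N) := by
    have : ((a*b : ℕ) : ℤ) = ((2 * (M*N) : ℕ) : ℤ) := by
      push_cast
      rw [hMN]
      push_cast at hx
      linarith [hx]
    exact_mod_cast this
  have hMN1 : 1 ≤ M * N := by
    have : a * b ≠ 0 := by positivity
    omega
  have hM1 : 1 ≤ M := by by_contra h; push_neg at h; interval_cases M <;> omega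
  have hN1 : 1 ≤ N := by
    by_contra h; push_neg at h
    interval_cases N <;> omega
  have hMNeq : a^2 + b^2 + N^2 = M^2 := by
    have : ((a:ℤ)^2 + b^2) + (N:ℤ)^2 = (M:ℤ)^2 := by rw [hM2, hN2]; linarith [hy]
    exact_mod_cast this
  have heMN : e = M^2 + N^2 := by
    have : ((e:ℕ):ℤ) = ((M^2 + N^2 : ℕ) : ℤ) := by push_cast; rw [hM2, hN2]; exact hze
    exact_mod_cast this
  have hgMN : Nat.Coprime M N := hcmn
  -- split a/2 and b along M and N using gcds
  obtain ⟨a₀, ha0⟩ : ∃ a₀, a = 2 * a₀ := ⟨a/2, by omega⟩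
  have ha0pos : 0 < a₀ := by omega
  have hA0B : a₀ * b = M * N := by
    have h1 : 2 * (a₀ * b) = a * b := by rw [ha0]; ring
    omega
  have ha0b : Nat.Coprime a₀ b :=
    Nat.Coprime.coprime_dvd_left ⟨2, by omega⟩ hab
  set k := Nat.gcd a₀ M with hkdef
  set l := Nat.gcd a₀ N with hldef
  set p := Nat.gcd b M with hpdef
  set q := Nat.gcd b N with hqdef
  have hkl : a₀ = k * l := by
    have hd : a₀ ∣ M * N := ⟨b, hA0B.symm⟩
    rw [hkdef, hldef, ← Nat.Coprime.gcd_mul a₀ hgMN, Nat.gcd_eq_left hd]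
  have hpq : b = p * q := by
    have hd : b ∣ M * N := ⟨a₀, by rw [← hA0B]; ring⟩
    rw [hpdef, hqdef, ← Nat.Coprime.gcd_mul b hgMN, Nat.gcd_eq_left hd]
  have hMkp : M = k * p := by
    have hd : M ∣ a₀ * b := ⟨N, by rw [hA0B]⟩
    rw [hkdef, hpdef, Nat.gcd_comm a₀ M, Nat.gcd_comm b M,
      ← Nat.Coprime.gcd_mul M ha0b, Nat.gcd_eq_left hd]
  have hNlq : N = l * q := by
    have hd : N ∣ a₀ * b := ⟨M, by rw [hA0B]; ring⟩
    rw [hldef, hqdef, Nat.gcd_comm a₀ N, Nat.gcd_comm b N,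
      ← Nat.Coprime.gcd_mul N ha0b, Nat.gcd_eq_left hd]
  have hk1 : 1 ≤ k := Nat.gcd_pos_of_pos_left M ha0pos
  have hl1 : 1 ≤ l := Nat.gcd_pos_of_pos_left N ha0pos
  have hp1 : 1 ≤ p := Nat.gcd_pos_of_pos_left M hb
  have hq1 : 1 ≤ q := Nat.gcd_pos_of_pos_left N hb
  have hpodd : p % 2 = 1 := by
    have hd : p ∣ b := Nat.gcd_dvd_left b M
    rcases hd with ⟨t, ht⟩
    rcases Nat.even_or_odd p with hpe | hpo
    · exfalso
      rcases hpe with ⟨u, hu⟩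
      have : b = 2*(u*t) := by rw [ht, hu]; ring
      omega
    · rcases hpo with ⟨u, hu⟩; omega
  have hqodd : q % 2 = 1 := by
    have hd : q ∣ b := Nat.gcd_dvd_left b N
    rcases hd with ⟨t, ht⟩
    rcases Nat.even_or_odd q with hpe | hpo
    · exfalso
      rcases hpe with ⟨u, hu⟩
      have : b = 2*(u*t) := by rw [ht, hu]; ring
      omega
    · rcases hpo with ⟨u, hu⟩; omega
  -- the master equation
  have star : k^2*p^2 = 4*k^2*l^2 + p^2*q^2 + l^2*q^2 := by
    have h1 := hMNeq
    rw [ha0, hkl, hpq, hMkp, hNlq] at h1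
    zify at h1 ⊢
    linear_combination -h1
  -- p^2 > 4 l^2
  have hC : 4*l^2 < p^2 := by
    by_contra hcon
    push_neg at hcon
    have h1 : k^2*p^2 ≤ k^2*(4*l^2) := Nat.mul_le_mul_left _ hcon
    have h2 : 0 < p^2*q^2 := by positivity
    have h3 : 0 < l^2*q^2 := by positivity
    have h4 : k^2*(4*l^2) = 4*k^2*l^2 := by ring
    omega
  -- the two factors and the common divisor δ
  have hCD : k^2 * (p^2 - 4*l^2) = q^2 * (p^2 + l^2) := by
    zify [Nat.le_of_lt hC]
    have starz : (k:ℤ)^2*p^2 = 4*k^2*l^2 + p^2*q^2 + l^2*q^2 := by exact_mod_cast star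
    linear_combination starz
  have hqk : Nat.Coprime q k :=
    Nat.Coprime.coprime_dvd_left (Nat.gcd_dvd_left b N)
      (Nat.Coprime.coprime_dvd_right (Nat.gcd_dvd_left a₀ M) ha0b.symm)
  have hdvd : q^2 ∣ k^2 * (p^2 - 4*l^2) := by
    rw [hCD]; exact dvd_mul_right _ _
  obtain ⟨δ, hδ⟩ := (Nat.Coprime.pow 2 2 hqk).dvd_of_dvd_mul_left hdvd
  have hD : p^2 + l^2 = k^2 * δ := by
    have h1 : q^2 * (p^2 + l^2) = q^2 * (k^2 * δ) := by
      rw [← hCD, hδ]; ring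
    exact Nat.eq_of_mul_eq_mul_left (by positivity) h1
  have hδC : δ ∣ p^2 - 4*l^2 := ⟨q^2, by rw [hδ]; ring⟩
  have hδD : δ ∣ p^2 + l^2 := ⟨k^2, by rw [hD]; ring⟩
  have hlp : Nat.Coprime l p :=
    Nat.Coprime.coprime_dvd_left (Nat.gcd_dvd_left a₀ N)
      (Nat.Coprime.coprime_dvd_right (Nat.gcd_dvd_left b M) ha0b)
  have hδ5 : δ ∣ 5 := by
    have h5l : δ ∣ 5*l^2 := by
      have h1 : (p^2 + l^2) - (p^2 - 4*l^2) = 5*l^2 := by omega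
      rw [← h1]; exact Nat.dvd_sub hδD hδC
    have h5p : δ ∣ 5*p^2 := by
      have h1 : 4*(p^2 + l^2) + (p^2 - 4*l^2) = 5*p^2 := by omega
      rw [← h1]; exact dvd_add (Dvd.dvd.mul_left hδD 4) hδC
    have h2 : δ ∣ Nat.gcd (5*l^2) (5*p^2) := Nat.dvd_gcd h5l h5p
    rwa [Nat.gcd_mul_left, Nat.Coprime.gcd_eq_one (Nat.Coprime.pow 2 2 hlp), Nat.mul_one] at h2
  have hδ15 : δ = 1 ∨ δ = 5 := by
    have h1 := Nat.le_of_dvd (by norm_num) hδ5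
    interval_cases δ <;> revert hδ5 <;> decide
  rcases hδ15 with rfl | rfl
  · -- δ = 1 : the descent case
    rw [Nat.mul_one] at hD hδ
    -- hD : p^2 + l^2 = k^2, hδ : p^2 - 4 l^2 = q^2
    have hq2 : p^2 = 4*l^2 + q^2 := by omega
    have hleven : l % 2 = 0 := by
      rcases Nat.even_or_odd l with hle | hlo
      · rcases hle with ⟨u, hu⟩; omega
      · exfalso
        have h1 := oddsqmod8 p hpodd
        have h2 := oddsqmod8 l (by rcases hlo with ⟨u,hu⟩; omega)
        have h3 := sqmod8 k
        omega
    have hpgtq : q < p := by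
      by_contra hcon
      push_neg at hcon
      have := Nat.pow_le_pow_left hcon 2
      have h2 : 0 < l^2 := by positivity
      omega
    obtain ⟨x, y, hpxy, hqxy⟩ : ∃ x y, p = x + y ∧ q + x = y :=
      ⟨(p-q)/2, (p+q)/2, by omega, by omega⟩
    have hp2x : p = q + 2*x := by omega
    have hxyl : x * y = l^2 := by
      have h1 : (q + 2*x)^2 = q^2 + 4*(x*(q+x)) := by ring
      have h3 : p^2 = (q + 2*x)^2 := by rw [hp2x]
      have h4 : x*(q+x) = l^2 := by omega
      rw [← hqxy, h4]
    have hx1 : 1 ≤ x := by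
      rcases Nat.eq_zero_or_pos x with h0 | h; swap; · exact h
      rw [h0] at hxyl
      simp at hxyl
      have : 0 < l^2 := by positivity
      omega
    have hy1 : 1 ≤ y := by omega
    have hcpq : Nat.Coprime p q :=
      Nat.Coprime.coprime_dvd_left (Nat.gcd_dvd_right b M)
        (Nat.Coprime.coprime_dvd_right (Nat.gcd_dvd_right b N) hgMN)
    have hcxy : Nat.Coprime x y := by
      have hdx : Nat.gcd x y ∣ p := by rw [hpxy]; exact dvd_add (Nat.gcd_dvd_left x y) (Nat.gcd_dvd_right x y)
      have hdq : Nat.gcd x y ∣ q := by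
        have h1 : y - x = q := by omega
        rw [← h1]; exact Nat.dvd_sub (Nat.gcd_dvd_right x y) (Nat.gcd_dvd_left x y)
      have := Nat.dvd_gcd hdx hdq
      rw [Nat.Coprime.gcd_eq_one hcpq] at this
      exact Nat.dvd_one.mp this
    -- x and y are coprime with product a square, hence both squares
    obtain ⟨g, hgx⟩ : ∃ g, x = g^2 := by
      apply exists_eq_pow_of_mul_eq_pow (α := ℕ) _ hxyl
      rw [Nat.isUnit_iff]; exact hcxy
    obtain ⟨h', hhy⟩ : ∃ h', y = h'^2 := by
      apply exists_eq_pow_of_mul_eq_pow (α := ℕ) _ (show y * x = l^2 by rw [mul_comm]; exact hxyl)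
      rw [Nat.isUnit_iff]; exact hcxy.symm
    have hg1 : 1 ≤ g := by
      rcases Nat.eq_zero_or_pos g with h0 | h; swap; · exact h
      rw [h0] at hgx; simp at hgx; omega
    have hh1 : 1 ≤ h' := by
      rcases Nat.eq_zero_or_pos h' with h0 | h; swap; · exact h
      rw [h0] at hhy; simp at hhy; omega
    have hcgh : Nat.Coprime g h' := by
      have h1 : Nat.Coprime (g^2) (h'^2) := by rw [← hgx, ← hhy]; exact hcxy
      exact Nat.Coprime.coprime_dvd_left (dvd_pow_self g two_ne_zero)
        (Nat.Coprime.coprime_dvd_right (dvd_pow_self h' two_ne_zero) h1)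
    -- the new, smaller solution
    have hknew : g^4 + 3*g^2*h'^2 + h'^4 = k^2 := by
      have h1 : p = g^2 + h'^2 := by rw [hpxy, hgx, hhy]
      have h2 : l^2 = g^2 * h'^2 := by rw [← hxyl, hgx, hhy]
      have h3 : g^4 + 3*g^2*h'^2 + h'^4 = (g^2+h'^2)^2 + g^2*h'^2 := by ring
      rw [h3, ← h1, ← h2]
      exact hD
    have hklt : k < e := by
      have h1 : k ∣ M := Nat.gcd_dvd_right a₀ M
      have h2 : k ≤ M := Nat.le_of_dvd (by omega) h1
      have h3 : M ≤ M^2 := Nat.le_self_pow two_ne_zero M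
      have h4 : 0 < N^2 := by positivity
      omega
    exact IH k hklt g h' hg1 hh1 hcgh hknew
  · -- δ = 5 : impossible mod 8 / mod 16
    -- hD : p^2 + l^2 = 5 k^2, hδ : p^2 - 4 l^2 = 5 q^2
    have hq2 : p^2 = 4*l^2 + 5*q^2 := by omega
    have hleven : l % 2 = 0 := by
      rcases Nat.even_or_odd l with hle | hlo
      · rcases hle with ⟨u, hu⟩; omega
      · exfalso
        have h1 := oddsqmod8 p hpodd
        have h2 := oddsqmod8 l (by rcases hlo with ⟨u,hu⟩; omega)
        have h3 := sqmod8 k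
        have h4 : p^2 + l^2 = k^2*5 := hD
        omega
    obtain ⟨l', hl'⟩ : ∃ l', l = 2*l' := ⟨l/2, by omega⟩
    have h16 : p^2 = 16*l'^2 + 5*q^2 := by
      have h1 : l^2 = 4*l'^2 := by rw [hl']; ring
      omega
    have h1 := oddsqmod8 p hpodd
    have h2 := oddsqmod8 q hqodd
    omega
private lemma no_quartic_sol : ∀ e a b : ℕ, 0 < a → 0 < b → Nat.Coprime a b →
    a^4 + 3*a^2*b^2 + b^4 ≠ e^2 := by
  intro e
  induction e using Nat.strong_induction_on with
  | _ e IH =>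
    intro a b ha hb hab heq
    rcases Nat.even_or_odd a with hae | hao
    · have ha2 : a % 2 = 0 := by rcases hae with ⟨u,hu⟩; omega
      have hb2 : b % 2 = 1 := by
        rcases Nat.even_or_odd b with hbe | hbo
        · exfalso
          rcases hbe with ⟨u,hu⟩
          have h1 : 2 ∣ Nat.gcd a b := Nat.dvd_gcd (by omega) (by omega)
          rw [Nat.Coprime.gcd_eq_one hab] at h1
          omega
        · rcases hbo with ⟨u,hu⟩; omega
      exact descent_core e IH a b ha hb ha2 hb2 hab heq
    · have ha2 : a % 2 = 1 := by rcases hao with ⟨u,hu⟩; omega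
      rcases Nat.even_or_odd b with hbe | hbo
      · have hb2 : b % 2 = 0 := by rcases hbe with ⟨u,hu⟩; omega
        have heq' : b^4 + 3*b^2*a^2 + a^4 = e^2 := by rw [← heq]; ring
        exact descent_core e IH b a hb ha hb2 ha2 hab.symm heq'
      · -- both odd: impossible mod 8
        have hb2 : b % 2 = 1 := by rcases hbo with ⟨u,hu⟩; omega
        have h1 := oddsqmod8 a ha2
        have h2 := oddsqmod8 b hb2
        have h3 := sqmod8 e
        have h4 : a^4 = (a^2)^2 := by ring
        have h5 : b^4 = (b^2)^2 := by ring
        have h6 := oddsqmod8 (a^2) (by omega)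
        have h7 := oddsqmod8 (b^2) (by omega)
        obtain ⟨s, hs⟩ : ∃ s, a^2 = 8*s+1 := ⟨a^2/8, by omega⟩
        obtain ⟨t, ht⟩ : ∃ t, b^2 = 8*t+1 := ⟨b^2/8, by omega⟩
        have h8 : 3*a^2*b^2 = 8*(24*(s*t)+3*s+3*t)+3 := by rw [hs, ht]; ring
        have h9 : a^4 = 8*(8*(s*s)+2*s)+1 := by
          have : a^4 = (a^2)^2 := by ring
          rw [this, hs]; ring
        have h10 : b^4 = 8*(8*(t*t)+2*t)+1 := by
          have : b^4 = (b^2)^2 := by ring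
          rw [this, ht]; ring
        omega

theorem stmt_9 :
    ¬ ∃ a b c d : ℤ, 0 < a ∧ 0 < b ∧ 0 < c ∧ 0 < d ∧
      Even a ∧ Odd b ∧ Odd c ∧ Odd d ∧
      Int.gcd a b = 1 ∧ Int.gcd c d = 1 ∧
      2 * a * b * c * d = (a ^ 2 + b ^ 2) * (c ^ 2 - d ^ 2) := by
  rintro ⟨a, b, c, d, ha, hb, hc, hd, hae, hbo, hco, hdo, hab, hcd, heq⟩
  have hab' : IsCoprime (a:ℤ) b := Int.isCoprime_iff_gcd_eq_one.mpr hab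
  have hcd' : IsCoprime (c:ℤ) d := Int.isCoprime_iff_gcd_eq_one.mpr hcd
  -- a^2+b^2 is coprime to 2*a*b
  have c1 : IsCoprime ((a:ℤ)^2+b^2) a := by
    have h1 : IsCoprime ((b:ℤ)^2) a := hab'.symm.pow_left
    have h2 := h1.add_mul_left_left a
    rwa [show b^2 + a*a = a^2+b^2 by ring] at h2
  have c2 : IsCoprime ((a:ℤ)^2+b^2) b := by
    have h1 : IsCoprime ((a:ℤ)^2) b := hab'.pow_left
    have h2 := h1.add_mul_left_left b
    rwa [show a^2 + b*b = a^2+b^2 by ring] at h2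
  have c3 : IsCoprime ((a:ℤ)^2+b^2) 2 := by
    obtain ⟨x, hx⟩ := hae
    obtain ⟨y, hy⟩ := hbo
    exact ⟨1, -(2*x^2 + 2*y^2 + 2*y), by rw [hx, hy]; ring⟩
  have cmain : IsCoprime ((a:ℤ)^2+b^2) (2*a*b) := by
    have := (c3.mul_right c1).mul_right c2
    exact this
  -- c*d is coprime to c^2-d^2
  have c4 : IsCoprime ((c:ℤ)*d) (c^2-d^2) := by
    have h1 : IsCoprime ((c:ℤ)^2-d^2) c := by
      have h0 : IsCoprime ((d:ℤ)^2) c := hcd'.symm.pow_left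
      have h2 := (h0.neg_left).add_mul_left_left c
      rwa [show -(d^2) + c*c = c^2-d^2 by ring] at h2
    have h3 : IsCoprime ((c:ℤ)^2-d^2) d := by
      have h0 : IsCoprime ((c:ℤ)^2) d := hcd'.pow_left
      have h4 := h0.add_mul_left_left (-d)
      rwa [show c^2 + d*(-d) = c^2-d^2 by ring] at h4
    exact (h1.mul_right h3).symm
  -- divisibilities
  have hdvd1 : ((a:ℤ)^2+b^2) ∣ c*d := by
    have h1 : ((a:ℤ)^2+b^2) ∣ (2*a*b)*(c*d) := ⟨c^2-d^2, by linear_combination heq⟩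
    exact cmain.dvd_of_dvd_mul_left h1
  have hdvd2 : ((c:ℤ)*d) ∣ (a^2+b^2) := by
    have h1 : ((c:ℤ)*d) ∣ (a^2+b^2)*(c^2-d^2) := ⟨2*a*b, by linear_combination -heq⟩
    exact c4.dvd_of_dvd_mul_right h1
  have heq2 : (c:ℤ)*d = a^2+b^2 :=
    Int.dvd_antisymm (by positivity) (by positivity) hdvd2 hdvd1
  have heq3 : (c:ℤ)^2-d^2 = 2*a*b := by
    have hne : ((a:ℤ)^2+b^2) ≠ 0 := by positivity
    apply mul_left_cancel₀ hne
    rw [← heq2] at heq ⊢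
    linear_combination -heq
  -- form the square
  obtain ⟨f, hf⟩ : ∃ f : ℤ, c^2+d^2 = 2*f := by
    obtain ⟨x, hx⟩ := hco
    obtain ⟨y, hy⟩ := hdo
    exact ⟨2*x^2+2*x+2*y^2+2*y+1, by rw [hx, hy]; ring⟩
  have h4f : 4*f^2 = 4*a^4+12*a^2*b^2+4*b^4 := by
    linear_combination (c^2-d^2+2*a*b)*heq3 + 4*(c*d+a^2+b^2)*heq2 - (c^2+d^2+2*f)*hf
  have f2 : f^2 = a^4+3*a^2*b^2+b^4 := by linarith
  -- transfer to ℕ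
  set A := a.natAbs with hAdef
  set B := b.natAbs with hBdef
  set F := f.natAbs with hFdef
  have hA : (A:ℤ) = a := Int.natAbs_of_nonneg ha.le
  have hB : (B:ℤ) = b := Int.natAbs_of_nonneg hb.le
  have hF2 : ((F:ℤ))^2 = f^2 := Int.natAbs_sq f
  have hQ : A^4+3*A^2*B^2+B^4 = F^2 := by
    have : ((A^4+3*A^2*B^2+B^4 : ℕ) : ℤ) = ((F^2 : ℕ) : ℤ) := by
      push_cast
      rw [hA, hB]
      rw [show ((F:ℤ))^2 = f^2 from hF2]
      linarith [f2]
    exact_mod_cast this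
  have hApos : 0 < A := Int.natAbs_pos.mpr (ne_of_gt ha)
  have hBpos : 0 < B := Int.natAbs_pos.mpr (ne_of_gt hb)
  have hcop : Nat.Coprime A B := hab
  exact no_quartic_sol F A B hApos hBpos hcop hQ
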